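/- If p is an a-dimensional subspace of F_q^n, then the number of c-dimensional subspaces w of F_q^n with dim(p ∩ w) = y equals q^{(a−y)(c−y)} · C_q(a, y) · C_q(n−a, c−y). -/

import Mathlib

noncomputable def gbinom (q : ℝ) (a k : ℤ) : ℝ :=
  if k < 0 then 0
  else ∏ i ∈ Finset.range k.toNat, (q ^ (a - k + i + 1) - 1) / (q ^ ((i : ℤ) + 1) - 1)


open Module Finset

/-- nat-indexed Gaussian product -/
noncomputable def gp (q : ℝ) (m k : ℕ) : ℝ :=
  (∏ i ∈ Finset.range k, (q ^ (m - i) - 1)) / (∏ i ∈ Finset.range k, (q ^ (i + 1) - 1))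

lemma denom_pos {q : ℝ} (hq : 1 < q) (i : ℕ) : 0 < q ^ (i + 1) - 1 := by
  have : 1 < q ^ (i + 1) := one_lt_pow₀ hq (Nat.succ_ne_zero i)
  linarith

lemma denom_prod_pos {q : ℝ} (hq : 1 < q) (k : ℕ) :
    0 < ∏ i ∈ Finset.range k, (q ^ (i + 1) - 1) :=
  Finset.prod_pos fun i _ => denom_pos hq i

lemma gp_succ {q : ℝ} (hq : 1 < q) (m k : ℕ) :
    gp q m (k + 1) = (q ^ m - 1) / (q ^ (k + 1) - 1) * gp q (m - 1) k := by
  unfold gp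
  rw [Finset.prod_range_succ', Finset.prod_range_succ]
  have h2 : (∏ i ∈ Finset.range k, (q ^ (m - (i + 1)) - 1)) =
      ∏ i ∈ Finset.range k, (q ^ (m - 1 - i) - 1) :=
    Finset.prod_congr rfl (fun i _ => by rw [show m - (i+1) = m - 1 - i from by omega])
  rw [h2, Nat.sub_zero]
  have h2 := (denom_prod_pos hq k).ne'
  have h3 := (denom_pos hq k).ne'
  field_simp

lemma gbinom_eq_gp {q : ℝ} (hq : 1 < q) (m k : ℕ) (hk : k ≤ m) :
    gbinom q m k = gp q m k := by
  unfold gbinom gp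
  rw [if_neg (show ¬((k:ℤ) < 0) by omega), Int.toNat_natCast]
  rw [Finset.prod_div_distrib]
  have hnum : (∏ i ∈ Finset.range k, (q ^ ((m:ℤ) - k + i + 1) - 1)) =
      ∏ i ∈ Finset.range k, (q ^ (m - i) - 1) := by
    rw [← Finset.prod_range_reflect (fun i => (q ^ (m - i) - 1)) k]
    apply Finset.prod_congr rfl
    intro i hi
    rw [Finset.mem_range] at hi
    have h1 : ((m : ℤ) - k + i + 1) = ((m - (k - 1 - i) : ℕ) : ℤ) := by omega
    rw [h1, zpow_natCast]
  have hden : (∏ i ∈ Finset.range k, (q ^ ((i:ℤ) + 1) - 1)) =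
      ∏ i ∈ Finset.range k, (q ^ (i + 1) - 1) := by
    apply Finset.prod_congr rfl
    intro i _
    have h2 : ((i : ℤ) + 1) = ((i + 1 : ℕ) : ℤ) := by push_cast; ring
    rw [h2, zpow_natCast]
  rw [hnum, hden]

lemma gbinom_eq_zero {q : ℝ} (m k : ℕ) (h : m < k) : gbinom q m k = 0 := by
  unfold gbinom
  rw [if_neg (show ¬((k:ℤ) < 0) by omega), Int.toNat_natCast]
  apply Finset.prod_eq_zero (Finset.mem_range.mpr (show k - m - 1 < k by omega))
  have : ((m : ℤ) - k + (k - m - 1 : ℕ) + 1) = 0 := by omega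
  rw [this, zpow_zero]
  simp

lemma gbinom_neg {q : ℝ} (a k : ℤ) (h : k < 0) : gbinom q a k = 0 := by
  unfold gbinom; rw [if_pos h]


section Infra

universe v
variable {F : Type*} [Field F] [Fintype F]

instance submodule_finite {M : Type v} [AddCommGroup M] [Module F M] [Finite M] :
    Finite (Submodule F M) :=
  Finite.of_injective (fun u => (u : Set M)) SetLike.coe_injective

lemma nat_card_sigma_real {ι : Type*} [Finite ι] (f : ι → Type v) [∀ i, Finite (f i)] {r : ℝ}
    (h : ∀ i, (Nat.card (f i) : ℝ) = r) : (Nat.card (Σ i, f i) : ℝ) = Nat.card ι * r := by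
  cases nonempty_fintype ι
  haveI : ∀ i, Fintype (f i) := fun i => Fintype.ofFinite (f i)
  rw [Nat.card_eq_fintype_card, Nat.card_eq_fintype_card, Fintype.card_sigma]
  push_cast
  rw [Finset.sum_congr rfl (fun i _ => by rw [← Nat.card_eq_fintype_card, h i])]
  rw [Finset.sum_const, card_univ, nsmul_eq_mul]

lemma card_submodule {M : Type v} [AddCommGroup M] [Module F M] [Finite M]
    (u : Submodule F M) : Nat.card u = Fintype.card F ^ finrank F u := by
  haveI : Fintype u := Fintype.ofFinite u
  rw [Nat.card_eq_fintype_card, card_eq_pow_finrank (K := F) (V := u)]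

lemma card_nonzero {M : Type v} [AddCommGroup M] [Module F M] [Finite M] :
    (Nat.card {x : M // x ≠ 0} : ℝ) = (Fintype.card F : ℝ) ^ finrank F M - 1 := by
  classical
  haveI : Fintype M := Fintype.ofFinite M
  have h0 : Nat.card {x : M // x ≠ 0} = Fintype.card M - 1 := by
    rw [Nat.card_eq_fintype_card]
    exact Set.card_ne_eq (0 : M)
  have h1 : Fintype.card M = Fintype.card F ^ finrank F M := card_eq_pow_finrank (K := F)
  rw [h0, h1]
  have h2 : 1 ≤ Fintype.card F ^ finrank F M := Nat.one_le_pow _ _ Fintype.card_pos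
  push_cast [Nat.cast_sub h2]
  ring

/-- restricted rank-nullity -/
lemma finrank_map_mkQ_add {M : Type v} [AddCommGroup M] [Module F M] [Finite M]
    (p w : Submodule F M) :
    finrank F (Submodule.map p.mkQ w) + finrank F (p ⊓ w : Submodule F M) = finrank F w := by
  haveI := Module.finite_of_finite (R := F) (M := M)
  have h := LinearMap.finrank_range_add_finrank_ker (p.mkQ.domRestrict w)
  rw [LinearMap.range_domRestrict] at h
  have hker : LinearMap.ker (p.mkQ.domRestrict w) = Submodule.comap w.subtype p := by
    ext x
    simp [LinearMap.mem_ker, Submodule.mem_comap]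
  rw [hker] at h
  have h2 : finrank F (Submodule.comap w.subtype p) = finrank F (p ⊓ w : Submodule F M) := by
    rw [← Submodule.finrank_map_subtype_eq w, Submodule.map_comap_subtype, inf_comm]
  rw [← h2, h]

end Infra

section CountSub

universe v
variable {F : Type*} [Field F] [Fintype F]

/-- nonzero elements of a submodule -/
lemma card_nonzero_mem {M : Type v} [AddCommGroup M] [Module F M] [Finite M]
    (u : Submodule F M) :
    (Nat.card {x : M // x ∈ u ∧ x ≠ 0} : ℝ) = (Fintype.card F : ℝ) ^ finrank F u - 1 := by
  have e : {x : M // x ∈ u ∧ x ≠ 0} ≃ {x : u // x ≠ 0} :=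
    { toFun := fun x => ⟨⟨x.1, x.2.1⟩, fun h => x.2.2 (congrArg Subtype.val h)⟩
      invFun := fun x => ⟨x.1.1, x.1.2, fun h => x.2 (Subtype.ext h)⟩
      left_inv := fun x => rfl
      right_inv := fun x => rfl }
  rw [Nat.card_congr e, card_nonzero (F := F) (M := u)]

theorem card_subspaces (k : ℕ) : ∀ (M : Type v) [AddCommGroup M] [Module F M] [Finite M],
    (Nat.card {u : Submodule F M // finrank F u = k} : ℝ)
      = gp (Fintype.card F) (finrank F M) k := by
  induction k with
  | zero =>
    intro M _ _ _
    haveI := Module.finite_of_finite (R := F) (M := M)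
    have hiff : ∀ u : Submodule F M, finrank F u = 0 ↔ u = ⊥ := fun u =>
      Submodule.finrank_eq_zero
    haveI : Unique {u : Submodule F M // finrank F u = 0} :=
      { default := ⟨⊥, by simp [hiff]⟩
        uniq := fun a => Subtype.ext (by rw [(hiff a.1).mp a.2]) }
    rw [Nat.card_unique]
    simp [gp]
  | succ k ih =>
    intro M _ _ _
    haveI := Module.finite_of_finite (R := F) (M := M)
    set q : ℝ := (Fintype.card F : ℝ) with hqdef
    have hq : (1 : ℝ) < q := by rw [hqdef]; exact_mod_cast Fintype.one_lt_card (α := F)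
    set m : ℕ := finrank F M with hmdef
    set X := {x : M // x ≠ 0}
    set U := {u : Submodule F M // finrank F u = k + 1}
    set T := {t : X × U // (t.1 : M) ∈ (t.2 : Submodule F M)}
    -- count 1 : fibers over U
    have e1 : T ≃ Σ u : U, {x : M // x ∈ (u : Submodule F M) ∧ x ≠ 0} :=
      { toFun := fun t => ⟨t.1.2, ⟨t.1.1.1, t.2, t.1.1.2⟩⟩
        invFun := fun s => ⟨(⟨s.2.1, s.2.2.2⟩, s.1), s.2.2.1⟩
        left_inv := fun t => rfl
        right_inv := fun s => rfl }
    have count1 : (Nat.card T : ℝ) = Nat.card U * (q ^ (k+1) - 1) := by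
      rw [Nat.card_congr e1]
      exact nat_card_sigma_real _ (fun u => by rw [card_nonzero_mem u.1, u.2])
    -- count 2 : fibers over X
    have e2 : T ≃ Σ x : X, {u : Submodule F M // finrank F u = k + 1 ∧ (x : M) ∈ u} :=
      { toFun := fun t => ⟨t.1.1, ⟨t.1.2.1, t.1.2.2, t.2⟩⟩
        invFun := fun s => ⟨(s.1, ⟨s.2.1, s.2.2.1⟩), s.2.2.2⟩
        left_inv := fun t => rfl
        right_inv := fun s => rfl }
    have count2 : (Nat.card T : ℝ) = Nat.card X * gp q (m - 1) k := by
      rw [Nat.card_congr e2]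
      refine nat_card_sigma_real _ (fun x => ?_)
      set s : Submodule F M := Submodule.span F {(x : M)} with hsdef
      have hs1 : finrank F s = 1 := finrank_span_singleton x.2
      have hcomap : ∀ u' : Submodule F (M ⧸ s), finrank F (Submodule.comap s.mkQ u')
          = finrank F u' + 1 := by
        intro u'
        have h := finrank_map_mkQ_add s (Submodule.comap s.mkQ u')
        rw [Submodule.map_comap_eq_of_surjective s.mkQ_surjective,
          inf_eq_left.mpr (Submodule.le_comap_mkQ s u'), hs1] at h
        omega
      have efib : {u : Submodule F M // finrank F u = k + 1 ∧ (x : M) ∈ u}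
          ≃ {u' : Submodule F (M ⧸ s) // finrank F u' = k} :=
        { toFun := fun u => ⟨Submodule.map s.mkQ u.1, by
            have hle : s ≤ u.1 := (Submodule.span_singleton_le_iff_mem _ _).mpr u.2.2
            have : Submodule.comap s.mkQ (Submodule.map s.mkQ u.1) = u.1 := by
              rw [Submodule.comap_map_mkQ, sup_eq_right.mpr hle]
            have h2 := hcomap (Submodule.map s.mkQ u.1)
            rw [this, u.2.1] at h2
            omega⟩
          invFun := fun u' => ⟨Submodule.comap s.mkQ u'.1, by
            rw [hcomap, u'.2]
            exact ⟨rfl, (Submodule.span_singleton_le_iff_mem _ _).mp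
              (Submodule.le_comap_mkQ s u'.1) ⟩⟩
          left_inv := fun u => Subtype.ext (by
            have hle : s ≤ u.1 := (Submodule.span_singleton_le_iff_mem _ _).mpr u.2.2
            simp only
            rw [Submodule.comap_map_mkQ, sup_eq_right.mpr hle])
          right_inv := fun u' => Subtype.ext
            (Submodule.map_comap_eq_of_surjective s.mkQ_surjective u'.1) }
      haveI : Finite (M ⧸ s) := Finite.of_surjective _ s.mkQ_surjective
      rw [Nat.card_congr efib, ih (M ⧸ s)]
      congr 2
      have hq1 := Submodule.finrank_quotient_add_finrank s
      rw [hs1] at hq1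
      omega
    have hX : (Nat.card X : ℝ) = q ^ m - 1 := card_nonzero
    have key : (Nat.card U : ℝ) * (q ^ (k+1) - 1) = (q ^ m - 1) * gp q (m - 1) k := by
      rw [← count1, count2, hX]
    rw [gp_succ hq]
    have hd : q ^ (k+1) - 1 ≠ 0 := (denom_pos hq k).ne'
    field_simp at key ⊢
    linarith [key]

end CountSub


section Fibration
universe v
variable {F : Type*} [Field F] [Fintype F]

lemma card_module (N : Type v) [AddCommGroup N] [Module F N] [Finite N] :
    Nat.card N = Fintype.card F ^ finrank F N := by
  haveI : Fintype N := Fintype.ofFinite N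
  rw [Nat.card_eq_fintype_card, card_eq_pow_finrank (K := F) (V := N)]

theorem card_fiber {V : Type v} [AddCommGroup V] [Module F V] [Finite V]
    (p u : Submodule F V) (hu : u ≤ p) (v : Submodule F (V ⧸ p)) :
    (Nat.card {w : Submodule F V // p ⊓ w = u ∧ Submodule.map p.mkQ w = v}) =
      Fintype.card F ^ ((finrank F p - finrank F u) * finrank F v) := by
  haveI := Module.finite_of_finite (R := F) (M := V)
  classical
  set u' : Submodule F p := Submodule.comap p.subtype u with hu'def
  obtain ⟨σ, hσ⟩ := p.mkQ.exists_rightInverse_of_surjective (Submodule.range_mkQ p)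
  obtain ⟨τ, hτ⟩ := u'.mkQ.exists_rightInverse_of_surjective (Submodule.range_mkQ u')
  have hσ' : ∀ z : V ⧸ p, p.mkQ (σ z) = z := fun z => LinearMap.ext_iff.mp hσ z
  have hτ' : ∀ z : ↥p ⧸ u', u'.mkQ (τ z) = z := fun z => LinearMap.ext_iff.mp hτ z
  set g : (↥v →ₗ[F] (↥p ⧸ u')) → (↥v →ₗ[F] V) :=
    fun f => σ.comp v.subtype + p.subtype.comp (τ.comp f) with hgdef
  have hg1 : ∀ f (x : ↥v), p.mkQ (g f x) = (x : V ⧸ p) := by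
    intro f x
    have h2 : p.mkQ (p.subtype (τ (f x))) = 0 := by
      rw [← LinearMap.mem_ker, Submodule.ker_mkQ]; exact (τ (f x)).2
    simp only [hgdef, LinearMap.add_apply, LinearMap.comp_apply, map_add, h2, add_zero]
    exact hσ' _
  set Φ : (↥v →ₗ[F] (↥p ⧸ u')) → Submodule F V :=
    fun f => u ⊔ LinearMap.range (g f) with hΦdef
  have hmem : ∀ f t, t ∈ Φ f ↔ ∃ e ∈ u, ∃ x : ↥v, t = e + g f x := by
    intro f t
    constructor
    · intro ht
      obtain ⟨e, he, r, hr, hrt⟩ := Submodule.mem_sup.mp ht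
      obtain ⟨x, hx⟩ := LinearMap.mem_range.mp hr
      exact ⟨e, he, x, by rw [← hrt, hx]⟩
    · rintro ⟨e, he, x, rfl⟩
      exact Submodule.add_mem_sup he (LinearMap.mem_range_self _ x)
  -- Φ f lands in the fiber
  have hΦmap : ∀ f, Submodule.map p.mkQ (Φ f) = v := by
    intro f
    have hc : p.mkQ.comp (g f) = v.subtype := LinearMap.ext (fun x => hg1 f x)
    have h1 : Submodule.map p.mkQ u = ⊥ := by
      rw [Submodule.eq_bot_iff]
      rintro z ⟨t, ht, rfl⟩
      rw [← LinearMap.mem_ker, Submodule.ker_mkQ]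
      exact hu ht
    rw [hΦdef]
    simp only [Submodule.map_sup, h1, bot_sup_eq]
    rw [← LinearMap.range_comp, hc, Submodule.range_subtype]
  have hΦinf : ∀ f, p ⊓ Φ f = u := by
    intro f
    refine le_antisymm ?_ (le_inf hu le_sup_left)
    rintro t ⟨htp, htΦ⟩
    obtain ⟨e, he, x, rfl⟩ := (hmem f _).mp htΦ
    have h0 : p.mkQ (e + g f x) = 0 := by
      rw [← LinearMap.mem_ker, Submodule.ker_mkQ]; exact htp
    have he0 : p.mkQ e = 0 := by
      rw [← LinearMap.mem_ker, Submodule.ker_mkQ]; exact hu he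
    rw [map_add, he0, zero_add, hg1] at h0
    have hx0 : x = 0 := by
      ext; exact h0
    rw [hx0, map_zero, add_zero]
    exact he
  -- Φ is injective
  have hinj : Function.Injective Φ := by
    intro f f' h
    ext x
    have h1 : g f x ∈ Φ f' := by
      rw [← h]; exact Submodule.mem_sup_right (LinearMap.mem_range_self _ x)
    obtain ⟨e, he, x', hx'⟩ := (hmem f' _).mp h1
    have hq1 : (x : V ⧸ p) = (x' : V ⧸ p) := by
      have := congrArg p.mkQ hx'
      rw [hg1, map_add, hg1] at this
      have he0 : p.mkQ e = 0 := by
        rw [← LinearMap.mem_ker, Submodule.ker_mkQ]; exact hu he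
      rw [he0, zero_add] at this
      exact this
    have hxx' : x = x' := Subtype.ext hq1
    subst hxx'
    -- e = g f x - g f' x = subtype (τ (f x) - τ (f' x))
    have h2 : p.subtype (τ (f x) - τ (f' x)) = e := by
      have : g f x - g f' x = e := by rw [hx']; abel
      rw [← this, hgdef]
      simp only [LinearMap.add_apply, LinearMap.comp_apply, map_sub]
      abel
    have h3 : τ (f x) - τ (f' x) ∈ u' := by
      show τ (f x) - τ (f' x) ∈ Submodule.comap p.subtype u
      rw [Submodule.mem_comap, h2]; exact he
    have h4 : u'.mkQ (τ (f x) - τ (f' x)) = 0 :=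
      (Submodule.Quotient.mk_eq_zero u').mpr h3
    rw [map_sub, hτ', hτ'] at h4
    exact (sub_eq_zero.mp h4)
  -- Φ is surjective onto the fiber
  have hsurjΦ : ∀ w : Submodule F V, p ⊓ w = u → Submodule.map p.mkQ w = v →
      ∃ f, Φ f = w := by
    intro w hw1 hw2
    have huw : u ≤ w := hw1 ▸ inf_le_right
    set πw : ↥w →ₗ[F] ↥v := LinearMap.codRestrict v (p.mkQ.comp w.subtype)
      (fun t => hw2 ▸ Submodule.mem_map_of_mem t.2) with hπdef
    have hπ : ∀ t : ↥w, (πw t : V ⧸ p) = p.mkQ (t : V) := fun t => rfl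
    have hsurj : Function.Surjective πw := by
      intro x
      have hx : (x : V ⧸ p) ∈ Submodule.map p.mkQ w := hw2.symm ▸ x.2
      obtain ⟨t, ht, hmk⟩ := hx
      exact ⟨⟨t, ht⟩, Subtype.ext hmk⟩
    set δ0 : V →ₗ[F] V := LinearMap.id - σ.comp p.mkQ with hδ0def
    have hδ0 : ∀ t, δ0 t ∈ p := by
      intro t
      rw [← Submodule.ker_mkQ p]
      have : p.mkQ (δ0 t) = 0 := by
        simp [hδ0def, map_sub, hσ']
      exact LinearMap.mem_ker.mpr this
    set δp : V →ₗ[F] ↥p := LinearMap.codRestrict p δ0 hδ0 with hδpdef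
    have hδpc : ∀ t : V, (δp t : V) = t - σ (p.mkQ t) := fun t => rfl
    set δ : ↥w →ₗ[F] (↥p ⧸ u') := u'.mkQ.comp (δp.comp w.subtype) with hδdef
    have hker : LinearMap.ker πw ≤ LinearMap.ker δ := by
      intro t ht
      rw [LinearMap.mem_ker] at ht ⊢
      have htp : (t : V) ∈ p := by
        have : p.mkQ (t : V) = 0 := by rw [← hπ, ht]; rfl
        rw [← Submodule.ker_mkQ p]; exact LinearMap.mem_ker.mpr this
      have htu : (t : V) ∈ u := hw1 ▸ ⟨htp, t.2⟩
      have h5 : δp (t : V) ∈ u' := by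
        rw [hu'def, Submodule.mem_comap]
        have hmk0 : p.mkQ (t : V) = 0 := by
          rw [← LinearMap.mem_ker, Submodule.ker_mkQ]; exact htp
        have : (δp (t : V) : V) = (t : V) := by rw [hδpc, hmk0, map_zero, sub_zero]
        rw [show p.subtype (δp (t : V)) = (δp (t : V) : V) from rfl, this]
        exact htu
      rw [hδdef]
      show u'.mkQ (δp (t : V)) = 0
      rw [← LinearMap.mem_ker, Submodule.ker_mkQ]
      exact h5
    set ew := LinearMap.quotKerEquivOfSurjective πw hsurj with hewdef
    set fw : ↥v →ₗ[F] (↥p ⧸ u') :=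
      ((LinearMap.ker πw).liftQ δ hker).comp (ew.symm : ↥v →ₗ[F] _) with hfwdef
    have hfw : ∀ t : ↥w, fw (πw t) = δ t := by
      intro t
      have h1 : ew.symm (πw t) = Submodule.Quotient.mk t := by
        rw [LinearEquiv.symm_apply_eq]; rfl
      show ((LinearMap.ker πw).liftQ δ hker) (ew.symm (πw t)) = δ t
      rw [h1, Submodule.liftQ_apply]
    have key : ∀ (x : ↥v) (t : ↥w), πw t = x → g fw x - (t : V) ∈ u := by
      intro x t ht
      have hx : (x : V ⧸ p) = p.mkQ (t : V) := by rw [← ht]; rfl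
      have hδd : u'.mkQ (τ (fw x) - δp (t : V)) = 0 := by
        rw [map_sub, hτ', ← ht, hfw t]
        show δ t - u'.mkQ (δp (t : V)) = 0
        rw [hδdef]
        show u'.mkQ (δp (t : V)) - u'.mkQ (δp (t : V)) = 0
        exact sub_self _
      have hd : τ (fw x) - δp (t : V) ∈ u' :=
        (Submodule.Quotient.mk_eq_zero u').mp hδd
      have heq : g fw x - (t : V) = p.subtype (τ (fw x) - δp (t : V)) := by
        rw [hgdef]
        simp only [LinearMap.add_apply, LinearMap.comp_apply, map_sub]
        rw [show p.subtype (δp (t : V)) = (δp (t : V) : V) from rfl, hδpc, ← hx]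
        show σ (x : V ⧸ p) + p.subtype (τ (fw x)) - (t : V) =
          p.subtype (τ (fw x)) - ((t : V) - σ (x : V ⧸ p))
        abel
      rw [heq]
      exact Submodule.mem_comap.mp hd
    refine ⟨fw, le_antisymm ?_ ?_⟩
    · rw [hΦdef]
      refine sup_le huw ?_
      rintro r ⟨x, rfl⟩
      obtain ⟨t, ht⟩ := hsurj x
      have hk := key x t ht
      have : g fw x = (g fw x - (t : V)) + (t : V) := by abel
      rw [this]
      exact Submodule.add_mem w (huw hk) t.2
    · intro t ht
      have hk := key (πw ⟨t, ht⟩) ⟨t, ht⟩ rfl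
      have : t = -(g fw (πw ⟨t, ht⟩) - t) + g fw (πw ⟨t, ht⟩) := by abel
      rw [this]
      exact Submodule.add_mem_sup (Submodule.neg_mem u hk)
        (LinearMap.mem_range_self _ _)
  -- conclude
  haveI : Finite (↥p ⧸ u') := Finite.of_surjective _ (Submodule.mkQ_surjective u')
  haveI : Finite (V ⧸ p) := Finite.of_surjective _ (Submodule.mkQ_surjective p)
  haveI : Finite ↥v := Subtype.finite
  haveI hfinpi : Finite (↥v → (↥p ⧸ u')) := Pi.finite
  haveI : Finite (↥v →ₗ[F] (↥p ⧸ u')) :=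
    Finite.of_injective (fun f => (f : ↥v → (↥p ⧸ u'))) DFunLike.coe_injective
  haveI := Module.finite_of_finite (R := F) (M := ↥v)
  haveI := Module.finite_of_finite (R := F) (M := (↥p ⧸ u'))
  set Ψ : (↥v →ₗ[F] (↥p ⧸ u')) → {w : Submodule F V //
      p ⊓ w = u ∧ Submodule.map p.mkQ w = v} := fun f => ⟨Φ f, hΦinf f, hΦmap f⟩ with hΨdef
  have hbij : Function.Bijective Ψ := by
    constructor
    · intro f f' h
      exact hinj (congrArg Subtype.val h)
    · rintro ⟨w, hw1, hw2⟩
      obtain ⟨f, hf⟩ := hsurjΦ w hw1 hw2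
      exact ⟨f, Subtype.ext hf⟩
  rw [Nat.card_congr (Equiv.ofBijective Ψ hbij).symm, card_module (F := F) (↥v →ₗ[F] (↥p ⧸ u'))]
  congr 1
  rw [Module.finrank_linearMap]
  have h1 := Submodule.finrank_quotient_add_finrank u'
  have h2 : finrank F u' = finrank F u :=
    LinearEquiv.finrank_eq (Submodule.comapSubtypeEquivOfLe hu)
  have h3 : finrank F u ≤ finrank F p := h1 ▸ h2 ▸ Nat.le_add_left _ _
  rw [mul_comm]
  congr 1
  omega
end Fibration


open Module

set_option maxHeartbeats 1000000 in
set_option synthInstance.maxHeartbeats 400000 in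
theorem stmt4 (F : Type*) [Field F] [Fintype F] (n a c y : ℕ)
    (p : Submodule F (Fin n → F)) (hp : finrank F p = a) :
    (Nat.card {w : Submodule F (Fin n → F) //
        finrank F w = c ∧ finrank F (p ⊓ w : Submodule F (Fin n → F)) = y} : ℝ) =
      (Fintype.card F : ℝ) ^ (((a : ℤ) - y) * ((c : ℤ) - y)) *
        gbinom (Fintype.card F) a y * gbinom (Fintype.card F) ((n : ℤ) - a) ((c : ℤ) - y) := by
  classical
  haveI := Module.finite_of_finite (R := F) (M := Fin n → F)
  haveI : Finite ((Fin n → F) ⧸ p) := Finite.of_surjective _ (Submodule.mkQ_surjective p)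
  set q : ℝ := (Fintype.card F : ℝ) with hqdef
  have hq : (1 : ℝ) < q := by rw [hqdef]; exact_mod_cast Fintype.one_lt_card (α := F)
  have hn : finrank F (Fin n → F) = n := Module.finrank_fin_fun F
  have han : a ≤ n := by have h := Submodule.finrank_le p; rw [hn] at h; omega
  have hquot : finrank F ((Fin n → F) ⧸ p) = n - a := by
    have := Submodule.finrank_quotient_add_finrank p
    rw [hp, hn] at this; omega
  by_cases hyc : y ≤ c
  · by_cases hya : y ≤ a
    · by_cases hcy : c - y ≤ n - a
      · -- main case
        set S := {w : Submodule F (Fin n → F) //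
          finrank F w = c ∧ finrank F (p ⊓ w : Submodule F (Fin n → F)) = y} with hSdef
        set U := {u : Submodule F (Fin n → F) // u ≤ p ∧ finrank F u = y} with hUdef
        set Vt := {v : Submodule F ((Fin n → F) ⧸ p) // finrank F v = c - y} with hVtdef
        have hfinw : ∀ w : S, finrank F (Submodule.map p.mkQ w.1) = c - y := by
          intro w
          have := finrank_map_mkQ_add p w.1
          rw [w.2.1, w.2.2] at this
          omega
        set Φm : S → U × Vt := fun w =>
          (⟨p ⊓ w.1, inf_le_left, w.2.2⟩, ⟨Submodule.map p.mkQ w.1, hfinw w⟩) with hΦmdef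
        have fibeq : ∀ z : U × Vt, {w : S // Φm w = z} ≃
            {w : Submodule F (Fin n → F) //
              p ⊓ w = z.1.1 ∧ Submodule.map p.mkQ w = z.2.1} := by
          intro z
          refine
            { toFun := fun w => ⟨w.1.1, ?_, ?_⟩
              invFun := fun w => ⟨⟨w.1, ?_, ?_⟩, ?_⟩
              left_inv := fun w => Subtype.ext (Subtype.ext rfl)
              right_inv := fun w => Subtype.ext rfl }
          · exact congrArg Subtype.val (congrArg Prod.fst w.2)
          · exact congrArg Subtype.val (congrArg Prod.snd w.2)
          · -- finrank w = c
            have h1 : finrank F (p ⊓ w.1 : Submodule F (Fin n → F)) = y := by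
              rw [w.2.1]; exact z.1.2.2
            have h2 : finrank F (Submodule.map p.mkQ w.1) = c - y := by
              rw [w.2.2]; exact z.2.2
            have h3 := finrank_map_mkQ_add p w.1
            omega
          · rw [w.2.1]; exact z.1.2.2
          · apply Prod.ext
            · exact Subtype.ext w.2.1
            · exact Subtype.ext w.2.2
        have fibcard : ∀ z : U × Vt, (Nat.card {w : S // Φm w = z} : ℝ) =
            q ^ ((a - y) * (c - y)) := by
          intro z
          rw [Nat.card_congr (fibeq z)]
          have h2 := z.1.2.1
          rw [card_fiber p z.1.1 h2 z.2.1]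
          rw [hp, z.1.2.2, z.2.2]
          push_cast
          rfl
        have hScard : (Nat.card S : ℝ) = Nat.card U * Nat.card Vt *
            q ^ ((a - y) * (c - y)) := by
          rw [Nat.card_congr (Equiv.sigmaFiberEquiv Φm).symm,
            nat_card_sigma_real _ fibcard, Nat.card_prod]
          push_cast
          ring
        have eU : U ≃ {u' : Submodule F ↥p // finrank F u' = y} :=
          { toFun := fun u => ⟨Submodule.comap p.subtype u.1, by
              rw [LinearEquiv.finrank_eq (Submodule.comapSubtypeEquivOfLe u.2.1)]
              exact u.2.2⟩
            invFun := fun u' => ⟨Submodule.map p.subtype u'.1,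
              Submodule.map_subtype_le p u'.1, by
              rw [Submodule.finrank_map_subtype_eq]; exact u'.2⟩
            left_inv := fun u => Subtype.ext (by
              simp only
              rw [Submodule.map_comap_subtype, inf_eq_right.mpr u.2.1])
            right_inv := fun u' => Subtype.ext (by
              simp only
              rw [Submodule.comap_map_eq_of_injective
                (show Function.Injective p.subtype from Subtype.val_injective)]) }
        have hU : (Nat.card U : ℝ) = gp q a y := by
          rw [Nat.card_congr eU, card_subspaces y ↥p, hp]
        have hVt : (Nat.card Vt : ℝ) = gp q (n - a) (c - y) := by
          rw [card_subspaces (c - y) ((Fin n → F) ⧸ p), hquot]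
        have hzpow : q ^ (((a : ℤ) - y) * ((c : ℤ) - y)) = q ^ ((a - y) * (c - y)) := by
          have h1 : (((a : ℤ) - y) * ((c : ℤ) - y)) = (((a - y) * (c - y) : ℕ) : ℤ) := by
            push_cast [Nat.cast_sub hya, Nat.cast_sub hyc]
            ring
          rw [h1, zpow_natCast]
        have hg1 : gbinom q a y = gp q a y := gbinom_eq_gp hq a y hya
        have hg2 : gbinom q ((n : ℤ) - a) ((c : ℤ) - y) = gp q (n - a) (c - y) := by
          have e1 : ((n : ℤ) - a) = ((n - a : ℕ) : ℤ) := by omega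
          have e2 : ((c : ℤ) - y) = ((c - y : ℕ) : ℤ) := by omega
          rw [e1, e2]
          exact gbinom_eq_gp hq (n - a) (c - y) hcy
        rw [hScard, hU, hVt, hzpow, hg1, hg2]
        ring
      · -- c - y > n - a : empty
        haveI : IsEmpty {w : Submodule F (Fin n → F) //
            finrank F w = c ∧ finrank F (p ⊓ w : Submodule F (Fin n → F)) = y} := by
          constructor
          rintro ⟨w, hw1, hw2⟩
          have h3 := finrank_map_mkQ_add p w
          have h4 : finrank F (Submodule.map p.mkQ w) ≤ n - a := by
            rw [← hquot]; exact Submodule.finrank_le _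
          omega
        rw [Nat.card_of_isEmpty]
        have e1 : ((n : ℤ) - a) = ((n - a : ℕ) : ℤ) := by omega
        have e2 : ((c : ℤ) - y) = ((c - y : ℕ) : ℤ) := by omega
        rw [e1, e2, gbinom_eq_zero (n - a) (c - y) (by omega)]
        simp
    · -- y > a : empty
      haveI : IsEmpty {w : Submodule F (Fin n → F) //
          finrank F w = c ∧ finrank F (p ⊓ w : Submodule F (Fin n → F)) = y} := by
        constructor
        rintro ⟨w, hw1, hw2⟩
        have : finrank F (p ⊓ w : Submodule F (Fin n → F)) ≤ finrank F p :=
          Submodule.finrank_mono inf_le_left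
        omega
      rw [Nat.card_of_isEmpty]
      rw [gbinom_eq_zero a y (by omega)]
      simp
  · -- y > c : empty
    haveI : IsEmpty {w : Submodule F (Fin n → F) //
        finrank F w = c ∧ finrank F (p ⊓ w : Submodule F (Fin n → F)) = y} := by
      constructor
      rintro ⟨w, hw1, hw2⟩
      have : finrank F (p ⊓ w : Submodule F (Fin n → F)) ≤ finrank F w :=
        Submodule.finrank_mono inf_le_right
      omega
    rw [Nat.card_of_isEmpty]
    rw [gbinom_neg ((n : ℤ) - a) ((c : ℤ) - y) (by omega)]
    simp
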